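/- Let p be a prime, let F be the algebraic closure of the field with p elements, let G = SL₂(F), let B ≤ G be the Borel subgroup of upper triangular matrices (those g with g₂₁ = 0), and let T ≤ G be the diagonal maximal torus (those g with g₁₂ = 0 and g₂₁ = 0). Let k be a field and let V = (G/B) →₀ k be the k-vector space with basis the left coset space G/B, on which G acts by left translation of the basis vectors. Then there exist two linearly independent k-linear maps f₁, f₂ : V → k such that fᵢ(t • v) = fᵢ(v) for all t ∈ T, v ∈ V and i = 1, 2. -/

import Mathlib

open Matrix

/-- The Borel subgroup of upper triangular matrices in `SL₂(R)`. -/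
def upperBorel (R : Type*) [CommRing R] : Subgroup (SpecialLinearGroup (Fin 2) R) where
  carrier := {g | (g : Matrix (Fin 2) (Fin 2) R) 1 0 = 0}
  one_mem' := by simp
  mul_mem' := by
    intro a b ha hb
    have ha' : (a : Matrix (Fin 2) (Fin 2) R) 1 0 = 0 := ha
    have hb' : (b : Matrix (Fin 2) (Fin 2) R) 1 0 = 0 := hb
    show ((a * b : SpecialLinearGroup (Fin 2) R) : Matrix (Fin 2) (Fin 2) R) 1 0 = 0
    have hm : ((a * b : SpecialLinearGroup (Fin 2) R) : Matrix (Fin 2) (Fin 2) R) = (a : Matrix (Fin 2) (Fin 2) R) * (b : Matrix (Fin 2) (Fin 2) R) :=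
      Matrix.SpecialLinearGroup.coe_mul a b
    rw [hm, Matrix.mul_apply, Fin.sum_univ_two, ha', hb']; ring
  inv_mem' := by
    intro a ha
    have ha' : (a : Matrix (Fin 2) (Fin 2) R) 1 0 = 0 := ha
    show ((a⁻¹ : SpecialLinearGroup (Fin 2) R) : Matrix (Fin 2) (Fin 2) R) 1 0 = 0
    have hi : ((a⁻¹ : SpecialLinearGroup (Fin 2) R) : Matrix (Fin 2) (Fin 2) R) = Matrix.adjugate (a : Matrix (Fin 2) (Fin 2) R) :=
      Matrix.SpecialLinearGroup.coe_inv a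
    rw [hi, Matrix.adjugate_fin_two]
    simp [ha']

/-- The diagonal maximal torus in `SL₂(R)`. -/
def diagonalTorus (R : Type*) [CommRing R] : Subgroup (SpecialLinearGroup (Fin 2) R) where
  carrier := {g | (g : Matrix (Fin 2) (Fin 2) R) 0 1 = 0 ∧
    (g : Matrix (Fin 2) (Fin 2) R) 1 0 = 0}
  one_mem' := by simp
  mul_mem' := by
    intro a b ha hb
    have ha' : (a : Matrix (Fin 2) (Fin 2) R) 0 1 = 0 ∧ (a : Matrix (Fin 2) (Fin 2) R) 1 0 = 0 := ha
    have hb' : (b : Matrix (Fin 2) (Fin 2) R) 0 1 = 0 ∧ (b : Matrix (Fin 2) (Fin 2) R) 1 0 = 0 := hb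
    show ((a * b : SpecialLinearGroup (Fin 2) R) : Matrix (Fin 2) (Fin 2) R) 0 1 = 0 ∧
      ((a * b : SpecialLinearGroup (Fin 2) R) : Matrix (Fin 2) (Fin 2) R) 1 0 = 0
    have hm : ((a * b : SpecialLinearGroup (Fin 2) R) : Matrix (Fin 2) (Fin 2) R) = (a : Matrix (Fin 2) (Fin 2) R) * (b : Matrix (Fin 2) (Fin 2) R) :=
      Matrix.SpecialLinearGroup.coe_mul a b
    rw [hm, Matrix.mul_apply, Matrix.mul_apply, Fin.sum_univ_two,
      Fin.sum_univ_two]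
    constructor
    · rw [ha'.1, hb'.1]; ring
    · rw [ha'.2, hb'.2]; ring
  inv_mem' := by
    intro a ha
    have ha' : (a : Matrix (Fin 2) (Fin 2) R) 0 1 = 0 ∧ (a : Matrix (Fin 2) (Fin 2) R) 1 0 = 0 := ha
    show ((a⁻¹ : SpecialLinearGroup (Fin 2) R) : Matrix (Fin 2) (Fin 2) R) 0 1 = 0 ∧
      ((a⁻¹ : SpecialLinearGroup (Fin 2) R) : Matrix (Fin 2) (Fin 2) R) 1 0 = 0
    have hi : ((a⁻¹ : SpecialLinearGroup (Fin 2) R) : Matrix (Fin 2) (Fin 2) R) = Matrix.adjugate (a : Matrix (Fin 2) (Fin 2) R) :=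
      Matrix.SpecialLinearGroup.coe_inv a
    rw [hi, Matrix.adjugate_fin_two]
    simp [ha'.1, ha'.2]

/-- Remark 3.2: for `G = SL₂(𝔽̄_p)`, `B` the upper-triangular Borel, `T` the
diagonal torus, and `V = k[G/B]` (with `G` acting by left translation of basis
vectors), there exist two linearly independent `T`-invariant linear functionals
on `V`, so `dim_k Hom_T(𝕄(tr), tr) ≥ 2`. -/
theorem stmt_10 (p : ℕ) [Fact p.Prime] (k : Type*) [Field k] :
    letI F := AlgebraicClosure (ZMod p)
    letI G := SpecialLinearGroup (Fin 2) F
    letI B := upperBorel F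
    ∃ f₁ f₂ : ((G ⧸ B) →₀ k) →ₗ[k] k,
      LinearIndependent k ![f₁, f₂] ∧
      (∀ t ∈ diagonalTorus F, ∀ v : (G ⧸ B) →₀ k,
        f₁ (Finsupp.mapDomain (fun x : G ⧸ B => t • x) v) = f₁ v) ∧
      (∀ t ∈ diagonalTorus F, ∀ v : (G ⧸ B) →₀ k,
        f₂ (Finsupp.mapDomain (fun x : G ⧸ B => t • x) v) = f₂ v) := by

  set F := AlgebraicClosure (ZMod p) with hF
  set G := SpecialLinearGroup (Fin 2) F with hG
  set B := upperBorel F with hB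
  -- the Weyl element
  set w : SpecialLinearGroup (Fin 2) F :=
    ⟨!![0, -1; 1, 0], by simp [Matrix.det_fin_two_of]⟩ with hw
  set x₁ : G ⧸ B := QuotientGroup.mk 1 with hx1
  set x₂ : G ⧸ B := QuotientGroup.mk w with hx2
  have hx12 : x₁ ≠ x₂ := by
    rw [hx1, hx2, Ne, QuotientGroup.eq]
    intro h
    have h2 : (((1 : SpecialLinearGroup (Fin 2) F)⁻¹ * w : SpecialLinearGroup (Fin 2) F) : Matrix (Fin 2) (Fin 2) F) 1 0 = 0 := h
    have hwm : (w : Matrix (Fin 2) (Fin 2) F) = !![0, -1; 1, 0] := rfl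
    rw [inv_one, one_mul, hwm] at h2
    simp at h2
  have hfix : ∀ t ∈ diagonalTorus F, (t • x₁ = x₁ ∧ t • x₂ = x₂) := by
    intro t ht
    obtain ⟨h01, h10⟩ := ht
    constructor
    · rw [hx1]
      show QuotientGroup.mk (t * 1) = QuotientGroup.mk 1
      rw [QuotientGroup.eq]
      show (((t * 1)⁻¹ * 1 : SpecialLinearGroup (Fin 2) F) : Matrix (Fin 2) (Fin 2) F) 1 0 = 0
      have e : (((t * 1)⁻¹ * 1 : SpecialLinearGroup (Fin 2) F) : Matrix (Fin 2) (Fin 2) F) = (t : Matrix (Fin 2) (Fin 2) F).adjugate := by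
        rw [mul_one, mul_one]; rfl
      rw [e, Matrix.adjugate_fin_two]
      simp [h10]
    · rw [hx2]
      show QuotientGroup.mk (t * w) = QuotientGroup.mk w
      rw [QuotientGroup.eq]
      show (((t * w)⁻¹ * w : SpecialLinearGroup (Fin 2) F) : Matrix (Fin 2) (Fin 2) F) 1 0 = 0
      have hwm : (w : Matrix (Fin 2) (Fin 2) F) = !![0, -1; 1, 0] := rfl
      have e : (((t * w)⁻¹ * w : SpecialLinearGroup (Fin 2) F) : Matrix (Fin 2) (Fin 2) F) = (w : Matrix (Fin 2) (Fin 2) F).adjugate * (t : Matrix (Fin 2) (Fin 2) F).adjugate * (w : Matrix (Fin 2) (Fin 2) F) := by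
        rw [_root_.mul_inv_rev]; rfl
      rw [e]
      simp [h01, h10, Matrix.adjugate_fin_two, hwm, Matrix.mul_apply, Fin.sum_univ_two]
  refine ⟨Finsupp.lapply x₁, Finsupp.lapply x₂, ?_, ?_, ?_⟩
  · rw [LinearIndependent.pair_iff]
    intro s t h
    have h1 := congrArg (fun φ => φ (Finsupp.single x₁ (1 : k))) h
    have h2 := congrArg (fun φ => φ (Finsupp.single x₂ (1 : k))) h
    simp only [LinearMap.add_apply, LinearMap.smul_apply, Finsupp.lapply_apply,
      Finsupp.single_eq_same, Finsupp.single_eq_of_ne hx12,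
      Finsupp.single_eq_of_ne (Ne.symm hx12),
      LinearMap.zero_apply, smul_eq_mul, mul_one, mul_zero, add_zero, zero_add] at h1 h2
    exact ⟨h1, h2⟩
  · intro t ht v
    have hinj : Function.Injective (fun x : G ⧸ B => t • x) := MulAction.injective t
    simp only [Finsupp.lapply_apply]
    conv_lhs => rw [← (hfix t ht).1]
    exact Finsupp.mapDomain_apply hinj v x₁
  · intro t ht v
    have hinj : Function.Injective (fun x : G ⧸ B => t • x) := MulAction.injective t
    simp only [Finsupp.lapply_apply]
    conv_lhs => rw [← (hfix t ht).2]
    exact Finsupp.mapDomain_apply hinj v x₂
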